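/- Let n ≥ 1 be an integer, μ > 0 real, and define φ* : ℂ^{n+1} → ℝ by φ*(z,w) = log(∏_{j=1}^n(1+|z_j|²)^μ + |w|²). Then φ* is strictly plurisubharmonic: for every p ∈ ℂ^{n+1} and every nonzero v ∈ ℂ^{n+1}, the smooth function g : ℝ² → ℝ, g(t,s) = φ*(p + (t + is)·v), has strictly positive Laplacian at the origin, i.e. ∂²g/∂t²(0,0) + ∂²g/∂s²(0,0) > 0. -/

import Mathlib

open Complex Finset in
private lemma nsq_re (z u : ℂ) (t : ℝ) :
    ‖z + (t : ℂ) * u‖ ^ 2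
      = Complex.normSq z + (2 * (z * (starRingEnd ℂ) u).re) * t
        + Complex.normSq u * t ^ 2 := by
  rw [Complex.sq_norm]
  simp [Complex.normSq_apply, Complex.mul_re, Complex.mul_im, Complex.add_re, Complex.add_im]
  ring

open Complex Finset in
private lemma nsq_im (z u : ℂ) (t : ℝ) :
    ‖z + ((t : ℂ) * Complex.I) * u‖ ^ 2
      = Complex.normSq z + (2 * (z * (starRingEnd ℂ) u).im) * t
        + Complex.normSq u * t ^ 2 := by
  rw [Complex.sq_norm]
  simp [Complex.normSq_apply, Complex.mul_re, Complex.mul_im, Complex.add_re, Complex.add_im]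
  ring

open Complex in
private lemma re_im_sq (z u : ℂ) :
    (2 * (z * (starRingEnd ℂ) u).re) ^ 2 + (2 * (z * (starRingEnd ℂ) u).im) ^ 2
      = 4 * (Complex.normSq z * Complex.normSq u) := by
  have h : Complex.normSq (z * (starRingEnd ℂ) u) = Complex.normSq z * Complex.normSq u := by
    rw [Complex.normSq_mul, Complex.normSq_conj]
  rw [Complex.normSq_apply] at h
  linear_combination 4 * h

private lemma hasDerivAt_quad (a α k t : ℝ) :
    HasDerivAt (fun t : ℝ => a + α * t + k * t ^ 2) (α + 2 * k * t) t := by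
  have h := ((hasDerivAt_const t a).add ((hasDerivAt_id t).const_mul α)).add
    ((hasDerivAt_pow 2 t).const_mul k)
  refine h.congr_deriv ?_
  push_cast
  ring

open Finset in
private lemma key_deriv2 (μ : ℝ) {N : ℕ} (a α k : Fin N → ℝ) (b c m : ℝ)
    (hq : ∀ j t, 0 < a j + α j * t + k j * t ^ 2)
    (hr : ∀ t : ℝ, 0 ≤ b + c * t + m * t ^ 2) :
    iteratedDeriv 2
        (fun t : ℝ => Real.log ((∏ j, (a j + α j * t + k j * t ^ 2) ^ μ)
          + (b + c * t + m * t ^ 2))) 0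
      = ((μ ^ 2 * (∏ j, a j ^ μ) * (∑ j, α j / a j) ^ 2
            + μ * (∏ j, a j ^ μ) * (∑ j, (2 * k j * a j - α j ^ 2) / a j ^ 2) + 2 * m)
              * ((∏ j, a j ^ μ) + b)
          - (μ * (∏ j, a j ^ μ) * (∑ j, α j / a j) + c) ^ 2)
        / ((∏ j, a j ^ μ) + b) ^ 2 := by
  set Q : Fin N → ℝ → ℝ := fun j t => a j + α j * t + k j * t ^ 2 with hQ
  set P : ℝ → ℝ := fun t => ∏ j, Q j t ^ μ with hPdef
  set S : ℝ → ℝ := fun t => ∑ j, (α j + 2 * k j * t) / Q j t with hSdef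
  set R : ℝ → ℝ := fun t => b + c * t + m * t ^ 2 with hRdef
  have hQpos : ∀ j t, 0 < Q j t := hq
  have hPpos : ∀ t, 0 < P t := fun t => Finset.prod_pos fun j _ =>
    Real.rpow_pos_of_pos (hQpos j t) μ
  have hFpos : ∀ t, 0 < P t + R t := fun t => lt_of_lt_of_le (hPpos t) (by
    have := hr t; simp only [hRdef]; linarith)
  have hPderiv : ∀ t, HasDerivAt P (μ * (P t * S t)) t := by
    intro t
    have h := HasDerivAt.fun_finset_prod (u := Finset.univ)
      (f := fun j s => Q j s ^ μ)
      (f' := fun j => (α j + 2 * k j * t) * μ * Q j t ^ (μ - 1)) (x := t)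
      (fun j _ => (hasDerivAt_quad (a j) (α j) (k j) t).rpow_const (Or.inl (hQpos j t).ne'))
    refine h.congr_deriv ?_
    rw [hSdef]
    simp only [smul_eq_mul]
    rw [Finset.mul_sum, Finset.mul_sum]
    refine Finset.sum_congr rfl fun j _ => ?_
    have hPj : P t = Q j t ^ μ * ∏ l ∈ Finset.univ.erase j, Q l t ^ μ :=
      (Finset.mul_prod_erase Finset.univ _ (Finset.mem_univ j)).symm
    rw [Real.rpow_sub_one (hQpos j t).ne', hPj]
    field_simp
  have hSderiv : ∀ t, HasDerivAt S
      (∑ j, (2 * k j * Q j t - (α j + 2 * k j * t) ^ 2) / Q j t ^ 2) t := by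
    intro t
    apply HasDerivAt.fun_sum
    intro j _
    have hd : HasDerivAt (fun s : ℝ => α j + 2 * k j * s) (2 * k j) t := by
      simpa using ((hasDerivAt_id t).const_mul (2 * k j)).const_add (α j)
    have := hd.div (hasDerivAt_quad (a j) (α j) (k j) t) (hQpos j t).ne'
    refine this.congr_deriv ?_
    ring
  have hRderiv : ∀ t, HasDerivAt R (c + 2 * m * t) t := fun t => hasDerivAt_quad b c m t
  have hg1 : deriv (fun t : ℝ => Real.log (P t + R t))
      = fun t => (μ * (P t * S t) + (c + 2 * m * t)) / (P t + R t) := by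
    funext t
    exact (((hPderiv t).add (hRderiv t)).log (hFpos t).ne').deriv
  have h2' : HasDerivAt (fun t : ℝ => c + 2 * m * t) (2 * m) 0 := by
    simpa using ((hasDerivAt_id (0:ℝ)).const_mul (2 * m)).const_add c
  have hNum := (((hPderiv 0).mul (hSderiv 0)).const_mul μ).add h2'
  have hden := (hPderiv 0).add (hRderiv 0)
  have hg2 := hNum.div hden (hFpos 0).ne'
  show iteratedDeriv 2 (fun t : ℝ => Real.log (P t + R t)) 0 = _
  rw [show iteratedDeriv 2 (fun t : ℝ => Real.log (P t + R t)) 0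
      = deriv (deriv fun t : ℝ => Real.log (P t + R t)) 0 by
    simp [iteratedDeriv_succ, iteratedDeriv_one]]
  rw [hg1, (show HasDerivAt (fun t : ℝ => (μ * (P t * S t) + (c + 2 * m * t)) / (P t + R t)) _ 0 from hg2).deriv]
  have hQ0 : ∀ j, Q j 0 = a j := by intro j; simp [hQ]
  have hP0 : P 0 = ∏ j, a j ^ μ := by
    rw [hPdef]; exact Finset.prod_congr rfl fun j _ => by rw [hQ0]
  have hS0 : S 0 = ∑ j, α j / a j := by
    rw [hSdef]; refine Finset.sum_congr rfl fun j _ => by rw [hQ0]; ring_nf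
  have hR0 : R 0 = b := by simp [hRdef]
  have hT0 : (∑ j, (2 * k j * Q j 0 - (α j + 2 * k j * 0) ^ 2) / Q j 0 ^ 2)
      = ∑ j, (2 * k j * a j - α j ^ 2) / a j ^ 2 := by
    refine Finset.sum_congr rfl fun j _ => by rw [hQ0]; ring_nf
  simp only [Pi.add_apply, Pi.mul_apply]
  rw [hP0, hS0, hR0, hT0]
  ring

private lemma alg_pos (μ P b m U S₁ S₂ c₁ c₂ T₁ T₂ : ℝ) (hμ : 0 < μ) (hP : 0 < P)
    (hb : 0 ≤ b) (hm : 0 ≤ m) (hU : 0 ≤ U)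
    (hT : T₁ + T₂ = 4 * U) (hc : c₁ ^ 2 + c₂ ^ 2 = 4 * b * m)
    (hpos : 0 < U ∨ (S₁ = 0 ∧ S₂ = 0 ∧ U = 0 ∧ 0 < m)) :
    0 < ((μ ^ 2 * P * S₁ ^ 2 + μ * P * T₁ + 2 * m) * (P + b) - (μ * P * S₁ + c₁) ^ 2)
      + ((μ ^ 2 * P * S₂ ^ 2 + μ * P * T₂ + 2 * m) * (P + b) - (μ * P * S₂ + c₂) ^ 2) := by
  rcases hpos with hU' | ⟨h1, h2, h3, hm'⟩
  · rcases hb.lt_or_eq with hb' | hb'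
    · have hbE : b * (((μ ^ 2 * P * S₁ ^ 2 + μ * P * T₁ + 2 * m) * (P + b)
            - (μ * P * S₁ + c₁) ^ 2)
          + ((μ ^ 2 * P * S₂ ^ 2 + μ * P * T₂ + 2 * m) * (P + b) - (μ * P * S₂ + c₂) ^ 2))
          = P * (b * μ * S₁ - c₁) ^ 2 + P * (b * μ * S₂ - c₂) ^ 2
            + 4 * b * μ * P * U * (P + b) := by
        linear_combination (b * μ * P * (P + b)) * hT - (P + b) * hc
      have hh3 : 0 < 4 * b * μ * P * U * (P + b) := by positivity
      nlinarith [mul_nonneg hP.le (sq_nonneg (b * μ * S₁ - c₁)),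
        mul_nonneg hP.le (sq_nonneg (b * μ * S₂ - c₂)), hb']
    · have hc1 : c₁ = 0 := by nlinarith [sq_nonneg c₁, sq_nonneg c₂]
      have hc2 : c₂ = 0 := by nlinarith [sq_nonneg c₁, sq_nonneg c₂]
      subst hc1 hc2
      have hb0 : b = 0 := hb'.symm
      subst hb0
      have hE : (((μ ^ 2 * P * S₁ ^ 2 + μ * P * T₁ + 2 * m) * (P + 0)
            - (μ * P * S₁ + 0) ^ 2)
          + ((μ ^ 2 * P * S₂ ^ 2 + μ * P * T₂ + 2 * m) * (P + 0) - (μ * P * S₂ + 0) ^ 2))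
          = 4 * μ * P * P * U + 4 * m * P := by
        linear_combination (μ * P * P) * hT
      rw [hE]
      have : 0 < 4 * μ * P * P * U := by positivity
      nlinarith [mul_nonneg hm hP.le]
  · subst h1 h2
    have hE : (((μ ^ 2 * P * 0 ^ 2 + μ * P * T₁ + 2 * m) * (P + b) - (μ * P * 0 + c₁) ^ 2)
        + ((μ ^ 2 * P * 0 ^ 2 + μ * P * T₂ + 2 * m) * (P + b) - (μ * P * 0 + c₂) ^ 2))
        = 4 * m * P := by
      linear_combination (μ * P * (P + b)) * hT + (4 * μ * P * (P + b)) * h3 - hc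
    rw [hE]
    positivity

/-- The dual Kähler potential `φ*_{n,μ}(z,w) = log(∏ j (1+|z_j|²)^μ + |w|²)`. -/
noncomputable def dualPotential (n : ℕ) (μ : ℝ) (p : (Fin n → ℂ) × ℂ) : ℝ :=
  Real.log ((∏ j, (1 + ‖p.1 j‖ ^ 2) ^ μ) + ‖p.2‖ ^ 2)

/-- Strict plurisubharmonicity of the dual potential: along every complex line
`c ↦ p + c • v` (`v ≠ 0`) the Laplacian of `φ*` at the origin is strictly positive;
here the Laplacian of `g(t,s) = φ*(p + (t + is) • v)` at `(0,0)` is written as the sum of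
the two second derivatives `∂²g/∂t²(0,0)` and `∂²g/∂s²(0,0)`. -/
theorem stmt_11 (n : ℕ) (hn : 1 ≤ n) (μ : ℝ) (hμ : 0 < μ)
    (p : (Fin n → ℂ) × ℂ) (v : (Fin n → ℂ) × ℂ) (hv : v ≠ 0) :
    0 <
      iteratedDeriv 2
          (fun t : ℝ => dualPotential n μ (p + ((t : ℂ) + (0 : ℝ) * Complex.I) • v)) 0 +
        iteratedDeriv 2
          (fun s : ℝ => dualPotential n μ (p + (((0 : ℝ) : ℂ) + (s : ℝ) * Complex.I) • v)) 0 := by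
  classical
  -- coefficient data
  set A : Fin n → ℝ := fun j => 1 + Complex.normSq (p.1 j) with hA
  set K : Fin n → ℝ := fun j => Complex.normSq (v.1 j) with hK
  set α₁ : Fin n → ℝ := fun j => 2 * (p.1 j * (starRingEnd ℂ) (v.1 j)).re with hα₁
  set α₂ : Fin n → ℝ := fun j => 2 * (p.1 j * (starRingEnd ℂ) (v.1 j)).im with hα₂
  set b : ℝ := Complex.normSq p.2 with hbdef
  set c₁ : ℝ := 2 * (p.2 * (starRingEnd ℂ) v.2).re with hc₁
  set c₂ : ℝ := 2 * (p.2 * (starRingEnd ℂ) v.2).im with hc₂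
  set m : ℝ := Complex.normSq v.2 with hmdef
  -- rewrite the two functions
  have hfun1 : (fun t : ℝ => dualPotential n μ (p + ((t : ℂ) + (0 : ℝ) * Complex.I) • v))
      = fun t : ℝ => Real.log ((∏ j, (A j + α₁ j * t + K j * t ^ 2) ^ μ)
        + (b + c₁ * t + m * t ^ 2)) := by
    funext t
    have hco : ((t : ℂ) + ((0 : ℝ) : ℂ) * Complex.I) = (t : ℂ) := by simp
    unfold dualPotential
    rw [hco]
    refine congrArg Real.log ?_
    simp only [Prod.fst_add, Prod.snd_add, Prod.smul_fst, Prod.smul_snd, Pi.add_apply,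
      Pi.smul_apply, smul_eq_mul]
    rw [nsq_re p.2 v.2 t]
    congr 1
    refine Finset.prod_congr rfl fun j _ => ?_
    rw [nsq_re (p.1 j) (v.1 j) t]
    congr 1
    simp only [hA, hα₁, hK]
    ring
  have hfun2 : (fun s : ℝ => dualPotential n μ (p + (((0 : ℝ) : ℂ) + (s : ℝ) * Complex.I) • v))
      = fun t : ℝ => Real.log ((∏ j, (A j + α₂ j * t + K j * t ^ 2) ^ μ)
        + (b + c₂ * t + m * t ^ 2)) := by
    funext t
    have hco : (((0 : ℝ) : ℂ) + (t : ℝ) * Complex.I) = (t : ℂ) * Complex.I := by simp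
    unfold dualPotential
    rw [hco]
    refine congrArg Real.log ?_
    simp only [Prod.fst_add, Prod.snd_add, Prod.smul_fst, Prod.smul_snd, Pi.add_apply,
      Pi.smul_apply, smul_eq_mul]
    rw [nsq_im p.2 v.2 t]
    congr 1
    refine Finset.prod_congr rfl fun j _ => ?_
    rw [nsq_im (p.1 j) (v.1 j) t]
    congr 1
    simp only [hA, hα₂, hK]
    ring
  -- positivity side conditions for key_deriv2
  have hq1 : ∀ (j : Fin n) (t : ℝ), 0 < A j + α₁ j * t + K j * t ^ 2 := by
    intro j t
    have h := nsq_re (p.1 j) (v.1 j) t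
    have h0 : (0:ℝ) ≤ ‖p.1 j + (t : ℂ) * v.1 j‖ ^ 2 := sq_nonneg _
    simp only [hA, hα₁, hK]
    nlinarith [h, h0]
  have hq2 : ∀ (j : Fin n) (t : ℝ), 0 < A j + α₂ j * t + K j * t ^ 2 := by
    intro j t
    have h := nsq_im (p.1 j) (v.1 j) t
    have h0 : (0:ℝ) ≤ ‖p.1 j + ((t : ℂ) * Complex.I) * v.1 j‖ ^ 2 := sq_nonneg _
    simp only [hA, hα₂, hK]
    nlinarith [h, h0]
  have hr1 : ∀ t : ℝ, 0 ≤ b + c₁ * t + m * t ^ 2 := by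
    intro t
    have h := nsq_re p.2 v.2 t
    have h0 : (0:ℝ) ≤ ‖p.2 + (t : ℂ) * v.2‖ ^ 2 := sq_nonneg _
    simp only [hbdef, hc₁, hmdef]
    nlinarith [h, h0]
  have hr2 : ∀ t : ℝ, 0 ≤ b + c₂ * t + m * t ^ 2 := by
    intro t
    have h := nsq_im p.2 v.2 t
    have h0 : (0:ℝ) ≤ ‖p.2 + ((t : ℂ) * Complex.I) * v.2‖ ^ 2 := sq_nonneg _
    simp only [hbdef, hc₂, hmdef]
    nlinarith [h, h0]
  rw [hfun1, hfun2, key_deriv2 μ A α₁ K b c₁ m hq1 hr1, key_deriv2 μ A α₂ K b c₂ m hq2 hr2]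
  rw [← add_div]
  have hApos : ∀ j, 0 < A j := fun j => by
    show 0 < 1 + Complex.normSq (p.1 j); linarith [Complex.normSq_nonneg (p.1 j)]
  have hP : 0 < ∏ j, A j ^ μ :=
    Finset.prod_pos fun j _ => Real.rpow_pos_of_pos (hApos j) μ
  have hb : 0 ≤ b := Complex.normSq_nonneg _
  have hm : 0 ≤ m := Complex.normSq_nonneg _
  apply div_pos _ (pow_pos (by linarith) 2)
  -- the combined numerator
  have hU : 0 ≤ ∑ j, K j / A j ^ 2 :=
    Finset.sum_nonneg fun j _ => div_nonneg (Complex.normSq_nonneg (v.1 _))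
      (sq_nonneg _)
  have hT : (∑ j, (2 * K j * A j - α₁ j ^ 2) / A j ^ 2)
      + (∑ j, (2 * K j * A j - α₂ j ^ 2) / A j ^ 2)
      = 4 * ∑ j, K j / A j ^ 2 := by
    rw [← Finset.sum_add_distrib, Finset.mul_sum]
    refine Finset.sum_congr rfl fun j _ => ?_
    rw [← add_div]
    have hsq := re_im_sq (p.1 j) (v.1 j)
    have hnum : (2 * K j * A j - α₁ j ^ 2) + (2 * K j * A j - α₂ j ^ 2) = 4 * K j := by
      simp only [hA, hα₁, hα₂, hK]
      linear_combination -hsq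
    rw [hnum, mul_div_assoc]
  have hc : c₁ ^ 2 + c₂ ^ 2 = 4 * b * m := by
    have hsq := re_im_sq p.2 v.2
    simp only [hc₁, hc₂, hbdef, hmdef]
    linear_combination hsq
  have hpos : 0 < (∑ j, K j / A j ^ 2)
      ∨ ((∑ j, α₁ j / A j) = 0 ∧ (∑ j, α₂ j / A j) = 0
        ∧ (∑ j, K j / A j ^ 2) = 0 ∧ 0 < m) := by
    by_cases h : ∀ j, v.1 j = 0
    · right
      refine ⟨Finset.sum_eq_zero fun j _ => by simp [hα₁, h j],
        Finset.sum_eq_zero fun j _ => by simp [hα₂, h j],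
        Finset.sum_eq_zero fun j _ => by simp [hK, h j], ?_⟩
      have hv2 : v.2 ≠ 0 := by
        intro h2
        exact hv (Prod.ext (funext h) h2)
      simpa only [hmdef] using Complex.normSq_pos.mpr hv2
    · left
      push_neg at h
      obtain ⟨j0, hj0⟩ := h
      refine Finset.sum_pos' (fun j _ => div_nonneg (Complex.normSq_nonneg (v.1 _))
        (sq_nonneg _)) ⟨j0, Finset.mem_univ j0, ?_⟩
      exact div_pos (by simp only [hK]; exact Complex.normSq_pos.mpr hj0) (pow_pos (hApos j0) 2)
  exact alg_pos μ (∏ j, A j ^ μ) b m (∑ j, K j / A j ^ 2)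
    (∑ j, α₁ j / A j) (∑ j, α₂ j / A j) c₁ c₂
    (∑ j, (2 * K j * A j - α₁ j ^ 2) / A j ^ 2)
    (∑ j, (2 * K j * A j - α₂ j ^ 2) / A j ^ 2)
    hμ hP hb hm hU hT hc hpos
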